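/- Let P, Q be elements of a commutative ring and define Ẑ_n(P,Q) as the weight-sum over Dyck-type paths of length 2n (steps ±1, from 0 to 0, staying ≥ 0) where a down-step gets weight Q if it follows an up-step and weight P if it follows a down-step; and define Z_n(P,Q) as the weight-sum over the same paths where down-steps alternately get weights depending only on the parity of the starting height: a down-step from an even height gets weight P and from an odd height gets weight Q. Then Ẑ_n(P,Q) = Z_n(P,Q) for all n ≥ 0, since both generating functions satisfy Z = 1/(1 - z(Q-P) - zP·Z), equivalently Z = 1/(1 - zQ/(1 - zP·Z)), with Z(0) = 1. -/

import Mathlib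

open PowerSeries

def stepVal (b : Bool) : ℤ := if b then 1 else -1

def pathSum (s : List Bool) : ℤ := (s.map stepVal).sum

def IsDyck (s : List Bool) : Prop :=
  pathSum s = 0 ∧ ∀ k ∈ Finset.range (s.length + 1), 0 ≤ pathSum (s.take k)

instance : DecidablePred IsDyck := fun s => by
  unfold IsDyck; infer_instance

/-- first model: a down-step following an up-step has weight `Q`,
a down-step following a down-step has weight `P`. -/
def pairWeight {R : Type*} [CommRing R] (P Q : R) : Bool → Bool → R
  | _, true => 1
  | true, false => Q
  | false, false => P

def hatWeight {R : Type*} [CommRing R] (P Q : R) (s : List Bool) : R :=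
  ((s.zip s.tail).map (fun p => pairWeight P Q p.1 p.2)).prod

/-- `Ẑ_n(P,Q)`: weight-sum in the first model over Dyck-type paths of length `2n`. -/
def Zhat {R : Type*} [CommRing R] (P Q : R) (n : ℕ) : R :=
  ∑ f ∈ Finset.univ.filter (fun f : Fin (2 * n) → Bool => IsDyck (List.ofFn f)),
    hatWeight P Q (List.ofFn f)

/-- second model: a down-step from an even height has weight `P`,
from an odd height weight `Q`; `h` is the current height. -/
def parityWeight {R : Type*} [CommRing R] (P Q : R) : ℤ → List Bool → R
  | _, [] => 1
  | h, true :: s => parityWeight P Q (h + 1) s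
  | h, false :: s => (if Even h then P else Q) * parityWeight P Q (h - 1) s

/-- `Z_n(P,Q)`: weight-sum in the second (parity/bicolored) model over
Dyck-type paths of length `2n`, starting at height `0`. -/
def Zpar {R : Type*} [CommRing R] (P Q : R) (n : ℕ) : R :=
  ∑ f ∈ Finset.univ.filter (fun f : Fin (2 * n) → Bool => IsDyck (List.ofFn f)),
    parityWeight P Q 0 (List.ofFn f)

-- basics
@[simp] lemma pathSum_nil : pathSum [] = 0 := rfl
@[simp] lemma pathSum_cons (b : Bool) (s : List Bool) :
    pathSum (b :: s) = stepVal b + pathSum s := rfl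
@[simp] lemma pathSum_append (a b : List Bool) :
    pathSum (a ++ b) = pathSum a + pathSum b := by
  simp [pathSum]

lemma isDyck_iff {s : List Bool} :
    IsDyck s ↔ pathSum s = 0 ∧ ∀ k, 0 ≤ pathSum (s.take k) := by
  constructor
  · rintro ⟨h0, h1⟩
    refine ⟨h0, fun k => ?_⟩
    rcases le_or_gt k s.length with hk | hk
    · exact h1 k (Finset.mem_range.2 (Nat.lt_succ_of_le hk))
    · rw [List.take_of_length_le hk.le, h0]
  · rintro ⟨h0, h1⟩
    exact ⟨h0, fun k _ => h1 k⟩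

lemma IsDyck.nil : IsDyck ([] : List Bool) := by
  constructor <;> simp [pathSum]

lemma isDyck_head {s : List Bool} (hs : IsDyck s) (hne : s ≠ []) :
    ∃ t, s = true :: t := by
  cases s with
  | nil => exact absurd rfl hne
  | cons c t =>
    cases c with
    | true => exact ⟨t, rfl⟩
    | false =>
      exfalso
      have := (isDyck_iff.1 hs).2 1
      simp [stepVal] at this

lemma isDyck_getLast {s : List Bool} (hs : IsDyck s) (hne : s ≠ []) :
    s.getLast hne = false := by
  by_contra h
  have hlast : s.getLast hne = true := by cases hl : s.getLast hne <;> simp_all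
  have hd := List.dropLast_append_getLast hne
  have h0 := (isDyck_iff.1 hs).1
  have h1 := (isDyck_iff.1 hs).2 (s.length - 1)
  have htake : s.take (s.length - 1) = s.dropLast := by
    rw [List.dropLast_eq_take]
  rw [htake] at h1
  have : pathSum s = pathSum s.dropLast + stepVal (s.getLast hne) := by
    conv_lhs => rw [← hd]
    simp
  rw [hlast] at this
  simp [stepVal] at this
  omega

-- prefix sums of (false :: B) are ≥ -1 when B has nonneg prefix sums
lemma pathSum_take_falseCons {B : List Bool} (hB : ∀ k, 0 ≤ pathSum (B.take k)) :
    ∀ j, -1 ≤ pathSum ((false :: B).take j) := by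
  intro j
  cases j with
  | zero => simp
  | succ j' =>
    have := hB j'
    simp only [List.take_succ_cons, pathSum_cons, stepVal]
    simp
    omega

lemma isDyck_compose {A B : List Bool} (hA : IsDyck A) (hB : IsDyck B) :
    IsDyck (true :: A ++ false :: B) := by
  rw [isDyck_iff] at *
  obtain ⟨hA0, hA1⟩ := hA
  obtain ⟨hB0, hB1⟩ := hB
  constructor
  · simp [stepVal, hA0, hB0]
  · intro k
    cases k with
    | zero => simp
    | succ k' =>
      have h1 : (true :: A ++ false :: B).take (k' + 1)
          = true :: (A.take k' ++ (false :: B).take (k' - A.length)) := by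
        simp [List.take_append]
      rw [h1]
      have h2 := hA1 k'
      have h3 := pathSum_take_falseCons hB1 (k' - A.length)
      simp only [pathSum_cons, pathSum_append, stepVal]
      simp
      omega

def go : ℕ → List Bool → List Bool × List Bool
  | _, [] => ([], [])
  | h, true :: s => (true :: (go (h+1) s).1, (go (h+1) s).2)
  | 0, false :: s => ([], s)
  | (h+1), false :: s => (false :: (go h s).1, (go h s).2)

lemma go_spec : ∀ (t : List Bool) (h : ℕ), pathSum t ≤ -(h+1 : ℤ) →
    t = (go h t).1 ++ false :: (go h t).2 ∧ pathSum (go h t).1 = -(h : ℤ) ∧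
      ∀ k, -(h : ℤ) ≤ pathSum ((go h t).1.take k) := by
  intro t
  induction t with
  | nil =>
    intro h ht
    rw [pathSum_nil] at ht
    exfalso; omega
  | cons c s ih =>
    intro h ht
    cases c with
    | true =>
      have hs : pathSum s ≤ -((h+1)+1 : ℤ) := by
        simp [stepVal] at ht ⊢; push_cast; omega
      obtain ⟨h1, h2, h3⟩ := ih (h+1) hs
      refine ⟨?_, ?_, ?_⟩
      · simp only [go]; rw [List.cons_append, ← h1]
      · simp only [go, pathSum_cons, stepVal, h2]; push_cast; ring
      · intro k
        cases k with
        | zero => simp only [go, List.take_zero, pathSum_nil]; omega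
        | succ k' =>
          have := h3 k'
          simp only [go, List.take_succ_cons, pathSum_cons, stepVal]
          push_cast at this ⊢
          omega
    | false =>
      cases h with
      | zero =>
        refine ⟨rfl, rfl, ?_⟩
        intro k
        show -(0:ℤ) ≤ pathSum (List.take k [])
        simp
      | succ h' =>
        have hs : pathSum s ≤ -((h' : ℤ)+1) := by
          simp [stepVal] at ht ⊢; push_cast at ht ⊢; omega
        obtain ⟨h1, h2, h3⟩ := ih h' hs
        refine ⟨?_, ?_, ?_⟩
        · simp only [go]; rw [List.cons_append, ← h1]
        · simp only [go, pathSum_cons, stepVal, h2]; push_cast; ring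
        · intro k
          cases k with
          | zero => simp only [go, List.take_zero, pathSum_nil]; push_cast; omega
          | succ k' =>
            have := h3 k'
            simp only [go, List.take_succ_cons, pathSum_cons, stepVal]
            push_cast at this ⊢
            omega

lemma split_len_le {A B a b : List Bool} (h : A ++ false :: B = a ++ false :: b)
    (hA : pathSum A = 0) (ha1 : ∀ k, 0 ≤ pathSum (a.take k)) : a.length ≤ A.length := by
  by_contra hlt
  push_neg at hlt
  have h1 : (A ++ false :: B).take (A.length + 1) = A ++ [false] := by
    have e : A ++ false :: B = (A ++ [false]) ++ B := by simp
    rw [e]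
    apply List.take_left'
    simp
  have h2 : (a ++ false :: b).take (A.length + 1) = a.take (A.length + 1) := by
    rw [List.take_append]
    have e : A.length + 1 - a.length = 0 := by omega
    rw [e]
    simp
  rw [h, h2] at h1
  have := ha1 (A.length + 1)
  rw [h1] at this
  simp [stepVal] at this
  omega

lemma split_unique {A B a b : List Bool} (h : A ++ false :: B = a ++ false :: b)
    (hA0 : pathSum A = 0) (hA1 : ∀ k, 0 ≤ pathSum (A.take k))
    (ha0 : pathSum a = 0) (ha1 : ∀ k, 0 ≤ pathSum (a.take k)) : A = a ∧ B = b := by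
  have hle1 := split_len_le h hA0 ha1
  have hle2 := split_len_le h.symm ha0 hA1
  have hlen : A.length = a.length := le_antisymm hle2 hle1
  have hAa : A = a := by
    have t1 : (A ++ false :: B).take A.length = A := List.take_left
    have t2 : (a ++ false :: b).take a.length = a := List.take_left
    rw [← t1, ← t2, h, hlen]
  refine ⟨hAa, ?_⟩
  subst hAa
  have h2 := List.append_cancel_left h
  injection h2

lemma dyck_decomp {s : List Bool} (hs : IsDyck s) (hne : s ≠ []) :
    IsDyck (go 0 s.tail).1 ∧ IsDyck (go 0 s.tail).2 ∧
      s = true :: (go 0 s.tail).1 ++ false :: (go 0 s.tail).2 := by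
  obtain ⟨t, rfl⟩ := isDyck_head hs hne
  rw [isDyck_iff] at hs
  obtain ⟨hs0, hs1⟩ := hs
  have ht : pathSum t ≤ -(0+1 : ℤ) := by
    simp [stepVal] at hs0; omega
  obtain ⟨h1, h2, h3⟩ := go_spec t 0 ht
  simp only [List.tail_cons]
  set A := (go 0 t).1 with hA
  set B := (go 0 t).2 with hB
  clear_value A B
  norm_num at h2 h3
  have hDA : IsDyck A := isDyck_iff.2 ⟨h2, h3⟩
  have hB0 : pathSum B = 0 := by
    rw [h1] at hs0
    simp [stepVal] at hs0
    omega
  refine ⟨hDA, isDyck_iff.2 ⟨hB0, ?_⟩, by rw [List.cons_append, ← h1]⟩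
  intro k
  have h4 := hs1 (A.length + 2 + k)
  have h5 : (true :: t).take (A.length + 2 + k) = (true :: A ++ [false]) ++ B.take k := by
    have e : true :: t = (true :: A ++ [false]) ++ B := by
      rw [h1]; simp
    have e2 : (true :: A ++ [false]).length = A.length + 2 := by simp
    rw [e, List.take_append, List.take_of_length_le (by rw [e2]; omega), e2,
      Nat.add_sub_cancel_left]
  rw [h5] at h4
  simp only [pathSum_append, pathSum_cons, pathSum_nil, List.cons_append] at h4
  simp [stepVal] at h4
  omega

lemma go_compose {A B : List Bool} (hA : IsDyck A) (hB0 : pathSum B = 0) :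
    go 0 (A ++ false :: B) = (A, B) := by
  rw [isDyck_iff] at hA
  have ht : pathSum (A ++ false :: B) ≤ -(0+1 : ℤ) := by
    simp [stepVal, hA.1, hB0]
  obtain ⟨h1, h2, h3⟩ := go_spec (A ++ false :: B) 0 ht
  norm_num at h2 h3
  obtain ⟨e1, e2⟩ := split_unique h1.symm h2 h3 hA.1 hA.2
  exact Prod.ext e1 e2

def dyckFinset (n : ℕ) : Finset (List Bool) :=
  ((Finset.univ : Finset (Fin n → Bool)).image List.ofFn).filter IsDyck

lemma mem_dyckFinset {n : ℕ} {s : List Bool} :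
    s ∈ dyckFinset n ↔ s.length = n ∧ IsDyck s := by
  simp only [dyckFinset, Finset.mem_filter, Finset.mem_image, Finset.mem_univ, true_and]
  constructor
  · rintro ⟨⟨f, rfl⟩, h⟩
    exact ⟨by simp, h⟩
  · rintro ⟨rfl, h⟩
    exact ⟨⟨fun i => s.get i, by simp [List.ofFn_getElem]⟩, h⟩

lemma sum_dyck_transfer {R : Type*} [CommRing R] (n : ℕ) (w : List Bool → R) :
    ∑ f ∈ Finset.univ.filter (fun f : Fin n → Bool => IsDyck (List.ofFn f)),
      w (List.ofFn f) = ∑ s ∈ dyckFinset n, w s := by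
  rw [dyckFinset, Finset.filter_image, Finset.sum_image]
  intro x _ y _ h
  exact List.ofFn_inj.1 h

lemma dyckFinset_odd_empty {n : ℕ} (hn : ¬ Even n) : dyckFinset n = ∅ := by
  rw [Finset.eq_empty_iff_forall_notMem]
  intro s hs
  rw [mem_dyckFinset] at hs
  obtain ⟨rfl, hd⟩ := hs
  apply hn
  have key : ∀ t : List Bool, Even ((t.length : ℤ) - pathSum t) := by
    intro t
    induction t with
    | nil => simp
    | cons c u ih =>
      have : ((c :: u).length : ℤ) - pathSum (c :: u)
          = ((u.length : ℤ) - pathSum u) + (1 - stepVal c) := by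
        simp; ring
      rw [this]
      apply ih.add
      cases c <;> simp [stepVal]
  have h2 := key s
  rw [hd.1, sub_zero] at h2
  exact_mod_cast h2

lemma sum_dyck_succ {R : Type*} [CommRing R] (m : ℕ) (w : List Bool → R) :
    ∑ s ∈ dyckFinset (m+2), w s =
      ∑ p ∈ Finset.HasAntidiagonal.antidiagonal m, ∑ A ∈ dyckFinset p.1, ∑ B ∈ dyckFinset p.2,
        w (true :: A ++ false :: B) := by
  have : ∀ p ∈ Finset.HasAntidiagonal.antidiagonal m, ∑ A ∈ dyckFinset p.1, ∑ B ∈ dyckFinset p.2,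
      w (true :: A ++ false :: B)
      = ∑ q ∈ dyckFinset p.1 ×ˢ dyckFinset p.2, w (true :: q.1 ++ false :: q.2) := by
    intro p _
    rw [Finset.sum_product]
  rw [Finset.sum_congr rfl this, ← Finset.sum_sigma (Finset.HasAntidiagonal.antidiagonal m)
    (fun p => dyckFinset p.1 ×ˢ dyckFinset p.2)
    (fun x => w (true :: x.2.1 ++ false :: x.2.2))]
  apply Finset.sum_nbij' (i := fun s =>
      (⟨((go 0 s.tail).1.length, (go 0 s.tail).2.length), ((go 0 s.tail).1, (go 0 s.tail).2)⟩ :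
        Σ _p : ℕ × ℕ, List Bool × List Bool))
    (j := fun x => true :: x.2.1 ++ false :: x.2.2)
  · -- maps to
    intro s hs
    rw [mem_dyckFinset] at hs
    obtain ⟨hlen, hd⟩ := hs
    have hne : s ≠ [] := by
      intro h; rw [h] at hlen; simp at hlen
    obtain ⟨dA, dB, hsplit⟩ := dyck_decomp hd hne
    rw [Finset.mem_sigma, Finset.mem_product, Finset.HasAntidiagonal.mem_antidiagonal]
    refine ⟨?_, ?_, ?_⟩
    · show (go 0 s.tail).1.length + (go 0 s.tail).2.length = m
      have := congrArg List.length hsplit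
      simp at this
      omega
    · exact mem_dyckFinset.2 ⟨rfl, dA⟩
    · exact mem_dyckFinset.2 ⟨rfl, dB⟩
  · -- maps from
    rintro ⟨⟨i1, i2⟩, A, B⟩ hx
    rw [Finset.mem_sigma, Finset.mem_product, Finset.HasAntidiagonal.mem_antidiagonal] at hx
    obtain ⟨hp, hA, hB⟩ := hx
    rw [mem_dyckFinset] at hA hB
    rw [mem_dyckFinset]
    constructor
    · simp only []
      have : (true :: A ++ false :: B).length = A.length + B.length + 2 := by
        simp
        omega
      rw [this, hA.1, hB.1]; omega
    · exact isDyck_compose hA.2 hB.2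
  · -- left inverse
    intro s hs
    rw [mem_dyckFinset] at hs
    have hne : s ≠ [] := by
      intro h; rw [h] at hs; simp at hs
    obtain ⟨dA, dB, hsplit⟩ := dyck_decomp hs.2 hne
    simp only []
    exact hsplit.symm
  · -- right inverse
    rintro ⟨⟨i1, i2⟩, A, B⟩ hx
    rw [Finset.mem_sigma, Finset.mem_product, Finset.HasAntidiagonal.mem_antidiagonal] at hx
    obtain ⟨hp, hA, hB⟩ := hx
    rw [mem_dyckFinset] at hA hB
    have htail : (true :: A ++ false :: B).tail = A ++ false :: B := rfl
    have hgo : go 0 (A ++ false :: B) = (A, B) := go_compose hA.2 (isDyck_iff.1 hB.2).1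
    simp only [htail, hgo]
    have e1 : i1 = A.length := hA.1.symm
    have e2 : i2 = B.length := hB.1.symm
    subst e1; subst e2
    rfl
  · -- values
    intro s hs
    rw [mem_dyckFinset] at hs
    have hne : s ≠ [] := by
      intro h; rw [h] at hs; simp at hs
    obtain ⟨dA, dB, hsplit⟩ := dyck_decomp hs.2 hne
    simp only []
    rw [← hsplit]

section weights
variable {R : Type*} [CommRing R] (P Q : R)

@[simp] lemma stepVal_true : stepVal true = 1 := rfl
@[simp] lemma stepVal_false : stepVal false = -1 := rfl

@[simp] lemma hatWeight_nil : hatWeight P Q [] = 1 := rfl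
@[simp] lemma hatWeight_single (x : Bool) : hatWeight P Q [x] = 1 := rfl

lemma hatWeight_cons_cons (x y : Bool) (l : List Bool) :
    hatWeight P Q (x :: y :: l) = pairWeight P Q x y * hatWeight P Q (y :: l) := by
  simp [hatWeight]

@[simp] lemma pairWeight_true (x : Bool) : pairWeight P Q x true = 1 := by
  cases x <;> rfl

lemma hatWeight_cons_dyck {B : List Bool} (hB : IsDyck B) (x : Bool) :
    hatWeight P Q (x :: B) = hatWeight P Q B := by
  cases B with
  | nil => simp
  | cons c t =>
    obtain ⟨t', he⟩ := isDyck_head hB (by simp)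
    have hc : c = true := by injection he
    subst hc
    rw [hatWeight_cons_cons]
    simp

lemma hatWeight_append_cons (s : List Bool) (hs : s ≠ []) (y : Bool) (t : List Bool) :
    hatWeight P Q (s ++ y :: t) =
      hatWeight P Q s * pairWeight P Q (s.getLast hs) y * hatWeight P Q (y :: t) := by
  induction s with
  | nil => exact absurd rfl hs
  | cons x s' ih =>
    cases s' with
    | nil =>
      simp [hatWeight_cons_cons]
    | cons c s'' =>
      have hne : c :: s'' ≠ [] := by simp
      have h1 : (x :: c :: s'') ++ y :: t = x :: (c :: (s'' ++ y :: t)) := by simp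
      rw [h1, hatWeight_cons_cons]
      have h2 : c :: (s'' ++ y :: t) = (c :: s'') ++ y :: t := by simp
      rw [h2, ih hne, hatWeight_cons_cons]
      rw [List.getLast_cons hne]
      ring

lemma hatWeight_split {A B : List Bool} (hA : IsDyck A) (hB : IsDyck B) :
    hatWeight P Q (true :: A ++ false :: B) =
      (if A = [] then Q else P) * hatWeight P Q A * hatWeight P Q B := by
  by_cases hAe : A = []
  · subst hAe
    simp only [if_true, List.cons_append, List.nil_append, hatWeight_nil]
    rw [hatWeight_cons_cons, hatWeight_cons_dyck P Q hB]
    simp [pairWeight]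
  · have hne : true :: A ≠ [] := by simp
    rw [hatWeight_append_cons P Q (true :: A) hne false B]
    have hlast : (true :: A).getLast hne = false := by
      rw [List.getLast_cons hAe]
      exact isDyck_getLast hA hAe
    rw [hlast, hatWeight_cons_dyck P Q hB, hatWeight_cons_dyck P Q hA]
    simp only [pairWeight, if_neg hAe]
    ring

@[simp] lemma parityWeight_nil (h : ℤ) : parityWeight P Q h [] = 1 := rfl

lemma parityWeight_append (a b : List Bool) : ∀ h : ℤ,
    parityWeight P Q h (a ++ b) =
      parityWeight P Q h a * parityWeight P Q (h + pathSum a) b := by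
  induction a with
  | nil => intro h; simp
  | cons c t ih =>
    intro h
    cases c with
    | true =>
      show parityWeight P Q (h+1) (t ++ b) =
        parityWeight P Q (h+1) t * parityWeight P Q (h + pathSum (true :: t)) b
      have e2 : h + pathSum (true :: t) = (h + 1) + pathSum t := by
        simp only [pathSum_cons, stepVal_true]; omega
      rw [e2, ih (h+1)]
    | false =>
      show (if Even h then P else Q) * parityWeight P Q (h-1) (t ++ b) =
        ((if Even h then P else Q) * parityWeight P Q (h-1) t) *
          parityWeight P Q (h + pathSum (false :: t)) b
      have e2 : h + pathSum (false :: t) = (h - 1) + pathSum t := by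
        simp only [pathSum_cons, stepVal_false]; omega
      rw [e2, ih (h-1)]
      ring

lemma parityWeight_swap (s : List Bool) : ∀ h : ℤ,
    parityWeight P Q (h + 1) s = parityWeight Q P h s := by
  induction s with
  | nil => intro h; simp
  | cons c t ih =>
    intro h
    cases c with
    | true =>
      simp only [parityWeight]
      rw [show h + 1 + 1 = (h + 1) + 1 from rfl, ih (h+1)]
    | false =>
      simp only [parityWeight]
      rw [show h + 1 - 1 = (h - 1) + 1 by ring, ih (h-1)]
      congr 1
      by_cases he : Even h <;> simp [Int.even_add_one, he]

lemma parityWeight_split {A B : List Bool} (hA : IsDyck A) :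
    parityWeight P Q 0 (true :: A ++ false :: B) =
      Q * parityWeight Q P 0 A * parityWeight P Q 0 B := by
  have h1 : true :: A ++ false :: B = true :: (A ++ false :: B) := by simp
  rw [h1]
  show parityWeight P Q (0+1) (A ++ false :: B) = _
  rw [parityWeight_append, (isDyck_iff.1 hA).1]
  simp only [add_zero]
  show parityWeight P Q (0+1) A * ((if Even (1:ℤ) then P else Q) * parityWeight P Q (1-1) B) = _
  rw [parityWeight_swap]
  norm_num
  ring
end weights

section recurrences
variable {R : Type*} [CommRing R] (P Q : R)

lemma dyckFinset_zero : dyckFinset 0 = {[]} := by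
  ext s
  rw [mem_dyckFinset, Finset.mem_singleton]
  constructor
  · rintro ⟨h1, _⟩
    exact List.length_eq_zero_iff.1 h1
  · rintro rfl
    exact ⟨rfl, IsDyck.nil⟩

lemma Zhat_eq_sum (n : ℕ) : Zhat P Q n = ∑ s ∈ dyckFinset (2*n), hatWeight P Q s :=
  sum_dyck_transfer (2*n) (hatWeight P Q)

lemma Zpar_eq_sum (n : ℕ) : Zpar P Q n = ∑ s ∈ dyckFinset (2*n), parityWeight P Q 0 s :=
  sum_dyck_transfer (2*n) (parityWeight P Q 0)

lemma Zhat_zero : Zhat P Q 0 = 1 := by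
  rw [Zhat_eq_sum]
  norm_num [dyckFinset_zero]

lemma Zpar_zero : Zpar P Q 0 = 1 := by
  rw [Zpar_eq_sum]
  norm_num [dyckFinset_zero]

lemma antid_even_reindex (n : ℕ) (F : ℕ × ℕ → R)
    (hF : ∀ p ∈ Finset.HasAntidiagonal.antidiagonal (2*n), ¬ Even p.1 → F p = 0) :
    ∑ p ∈ Finset.HasAntidiagonal.antidiagonal (2*n), F p
      = ∑ q ∈ Finset.HasAntidiagonal.antidiagonal n, F (2*q.1, 2*q.2) := by
  have himg : (Finset.HasAntidiagonal.antidiagonal n).image (fun q : ℕ × ℕ => (2*q.1, 2*q.2))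
      = (Finset.HasAntidiagonal.antidiagonal (2*n)).filter (fun p => Even p.1) := by
    ext p
    simp only [Finset.mem_image, Finset.mem_filter, Finset.HasAntidiagonal.mem_antidiagonal]
    constructor
    · rintro ⟨q, hq, rfl⟩
      exact ⟨by omega, ⟨q.1, by ring⟩⟩
    · rintro ⟨hsum, a, ha⟩
      refine ⟨(a, n - a), ?_, ?_⟩
      · simp only [Finset.HasAntidiagonal.mem_antidiagonal]
        omega
      · rw [Prod.ext_iff]
        constructor
        · simp only []
          omega
        · simp only []
          omega
  have h2 : ∑ q ∈ Finset.HasAntidiagonal.antidiagonal n, F (2*q.1, 2*q.2)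
      = ∑ p ∈ (Finset.HasAntidiagonal.antidiagonal (2*n)).filter (fun p => Even p.1), F p := by
    rw [← himg, Finset.sum_image]
    intro x _ y _ h
    simp only [Prod.mk.injEq] at h
    ext <;> omega
  rw [h2, ← Finset.sum_filter_add_sum_filter_not (Finset.HasAntidiagonal.antidiagonal (2*n))
    (fun p => Even p.1) F]
  have h3 : ∑ p ∈ (Finset.HasAntidiagonal.antidiagonal (2*n)).filter (fun p => ¬ Even p.1), F p = 0 := by
    apply Finset.sum_eq_zero
    intro p hp
    rw [Finset.mem_filter] at hp
    exact hF p hp.1 hp.2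
  rw [h3, add_zero]

lemma dyckFinset_sum_even {m : ℕ} (hm : ¬ Even m) (w : List Bool → R) :
    ∑ s ∈ dyckFinset m, w s = 0 := by
  rw [dyckFinset_odd_empty hm, Finset.sum_empty]

lemma mem_dyckFinset_nil_iff {m : ℕ} : ([] : List Bool) ∈ dyckFinset m ↔ m = 0 := by
  rw [mem_dyckFinset]
  constructor
  · rintro ⟨h, _⟩
    simpa using h.symm
  · rintro rfl
    exact ⟨rfl, IsDyck.nil⟩

lemma Zhat_rec (n : ℕ) : Zhat P Q (n+1) =
    (Q - P) * Zhat P Q n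
      + P * ∑ q ∈ Finset.HasAntidiagonal.antidiagonal n, Zhat P Q q.1 * Zhat P Q q.2 := by
  rw [Zhat_eq_sum]
  have e : 2 * (n+1) = 2*n + 2 := by ring
  rw [e, sum_dyck_succ]
  have step1 : ∀ p ∈ Finset.HasAntidiagonal.antidiagonal (2*n),
      ∑ A ∈ dyckFinset p.1, ∑ B ∈ dyckFinset p.2, hatWeight P Q (true :: A ++ false :: B)
      = (if p.1 = 0 then (Q-P) * ∑ B ∈ dyckFinset p.2, hatWeight P Q B else 0)
        + P * ((∑ A ∈ dyckFinset p.1, hatWeight P Q A)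
            * (∑ B ∈ dyckFinset p.2, hatWeight P Q B)) := by
    intro p _
    have inner : ∀ A ∈ dyckFinset p.1,
        ∑ B ∈ dyckFinset p.2, hatWeight P Q (true :: A ++ false :: B)
        = (if A = [] then (Q-P) else 0) * (∑ B ∈ dyckFinset p.2, hatWeight P Q B)
          + (P * hatWeight P Q A) * (∑ B ∈ dyckFinset p.2, hatWeight P Q B) := by
      intro A hA
      have hw : ∀ B ∈ dyckFinset p.2, hatWeight P Q (true :: A ++ false :: B)
          = ((if A = [] then (Q-P) else 0) + P * hatWeight P Q A) * hatWeight P Q B := by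
        intro B hB
        rw [hatWeight_split P Q (mem_dyckFinset.1 hA).2 (mem_dyckFinset.1 hB).2]
        by_cases hAe : A = []
        · subst hAe
          simp only [eq_self_iff_true, if_true, hatWeight_nil, mul_one]
          ring
        · simp only [if_neg hAe]
          ring
      rw [Finset.sum_congr rfl hw, ← Finset.mul_sum, add_mul]
    rw [Finset.sum_congr rfl inner, Finset.sum_add_distrib]
    congr 1
    · by_cases h0 : p.1 = 0
      · rw [h0, dyckFinset_zero, Finset.sum_singleton, if_pos rfl, if_pos rfl]
      · rw [if_neg h0]
        apply Finset.sum_eq_zero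
        intro A hA
        have hne : A ≠ [] := fun h => h0 (mem_dyckFinset_nil_iff.1 (h ▸ hA))
        rw [if_neg hne, zero_mul]
    · rw [← Finset.sum_mul, ← Finset.mul_sum, mul_assoc]
  rw [Finset.sum_congr rfl step1, Finset.sum_add_distrib]
  congr 1
  · rw [Finset.sum_eq_single_of_mem ((0 : ℕ), 2*n) (by simp)]
    · rw [if_pos rfl, Zhat_eq_sum]
    · intro p hp hne
      rw [Finset.HasAntidiagonal.mem_antidiagonal] at hp
      apply if_neg
      intro h0
      exact hne (Prod.ext (by simpa using h0) (by simp; omega))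
  · rw [← Finset.mul_sum]
    congr 1
    rw [antid_even_reindex n
      (fun p => (∑ A ∈ dyckFinset p.1, hatWeight P Q A)
        * (∑ B ∈ dyckFinset p.2, hatWeight P Q B))]
    · apply Finset.sum_congr rfl
      intro q _
      rw [Zhat_eq_sum, Zhat_eq_sum]
    · intro p _ hodd
      rw [dyckFinset_sum_even hodd, zero_mul]

lemma Zpar_rec (n : ℕ) : Zpar P Q (n+1) =
    Q * ∑ q ∈ Finset.HasAntidiagonal.antidiagonal n, Zpar Q P q.1 * Zpar P Q q.2 := by
  rw [Zpar_eq_sum]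
  have e : 2 * (n+1) = 2*n + 2 := by ring
  rw [e, sum_dyck_succ]
  have step1 : ∀ p ∈ Finset.HasAntidiagonal.antidiagonal (2*n),
      ∑ A ∈ dyckFinset p.1, ∑ B ∈ dyckFinset p.2, parityWeight P Q 0 (true :: A ++ false :: B)
      = Q * ((∑ A ∈ dyckFinset p.1, parityWeight Q P 0 A)
          * (∑ B ∈ dyckFinset p.2, parityWeight P Q 0 B)) := by
    intro p _
    have inner : ∀ A ∈ dyckFinset p.1,
        ∑ B ∈ dyckFinset p.2, parityWeight P Q 0 (true :: A ++ false :: B)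
        = (Q * parityWeight Q P 0 A) * (∑ B ∈ dyckFinset p.2, parityWeight P Q 0 B) := by
      intro A hA
      have hw : ∀ B ∈ dyckFinset p.2, parityWeight P Q 0 (true :: A ++ false :: B)
          = (Q * parityWeight Q P 0 A) * parityWeight P Q 0 B := by
        intro B hB
        rw [parityWeight_split P Q (mem_dyckFinset.1 hA).2]
      rw [Finset.sum_congr rfl hw, ← Finset.mul_sum]
    rw [Finset.sum_congr rfl inner, ← Finset.sum_mul, ← Finset.mul_sum, mul_assoc]
  rw [Finset.sum_congr rfl step1, ← Finset.mul_sum]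
  congr 1
  rw [antid_even_reindex n (fun p => (∑ A ∈ dyckFinset p.1, parityWeight Q P 0 A)
      * (∑ B ∈ dyckFinset p.2, parityWeight P Q 0 B))]
  · apply Finset.sum_congr rfl
    intro q _
    rw [Zpar_eq_sum, Zpar_eq_sum]
  · intro p _ hodd
    rw [dyckFinset_sum_even hodd, zero_mul]
end recurrences

section final
variable {R : Type*} [CommRing R] (P Q : R)

lemma Zhat_ps : (mk (Zhat P Q) : R⟦X⟧)
    = 1 + X * C (Q - P) * mk (Zhat P Q)
      + X * C P * (mk (Zhat P Q) * mk (Zhat P Q)) := by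
  ext n
  cases n with
  | zero =>
    simp [Zhat_zero]
  | succ n =>
    rw [coeff_mk, Zhat_rec]
    rw [show (1 : R⟦X⟧) + X * C (Q-P) * mk (Zhat P Q)
        + X * C P * (mk (Zhat P Q) * mk (Zhat P Q))
        = 1 + (X * (C (Q-P) * mk (Zhat P Q))
          + X * (C P * (mk (Zhat P Q) * mk (Zhat P Q)))) from by ring]
    rw [map_add, map_add, coeff_succ_X_mul, coeff_succ_X_mul, coeff_C_mul, coeff_C_mul,
      coeff_mk, coeff_mul, PowerSeries.coeff_one]
    simp only [Nat.succ_ne_zero, if_false, zero_add, coeff_mk]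

lemma Zpar_ps : (mk (Zpar P Q) : R⟦X⟧)
    = 1 + X * C Q * (mk (Zpar Q P) * mk (Zpar P Q)) := by
  ext n
  cases n with
  | zero =>
    simp [Zpar_zero]
  | succ n =>
    rw [coeff_mk, Zpar_rec]
    rw [show (1 : R⟦X⟧) + X * C Q * (mk (Zpar Q P) * mk (Zpar P Q))
        = 1 + X * (C Q * (mk (Zpar Q P) * mk (Zpar P Q))) from by ring]
    rw [map_add, coeff_succ_X_mul, coeff_C_mul, coeff_mul, PowerSeries.coeff_one]
    simp only [Nat.succ_ne_zero, if_false, zero_add, coeff_mk]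

theorem stmt10_aux {R : Type*} [CommRing R] (P Q : R) :
    (∀ n : ℕ, Zhat P Q n = Zpar P Q n) ∧
    (PowerSeries.mk (Zhat P Q)) *
        (1 - X * C (Q - P) - X * C P * (PowerSeries.mk (Zhat P Q))) = 1 ∧
    constantCoeff (PowerSeries.mk (Zhat P Q)) = 1 := by
  have hf : (mk (Zhat P Q) : R⟦X⟧) *
      (1 - X * C (Q - P) - X * C P * mk (Zhat P Q)) = 1 := by
    linear_combination Zhat_ps P Q
  have hg : (mk (Zpar P Q) : R⟦X⟧) *
      (1 - X * C (Q - P) - X * C P * mk (Zpar P Q)) = 1 := by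
    have e1 := Zpar_ps P Q
    have e2 := Zpar_ps Q P
    have hC : C (Q - P) = C Q - C P := map_sub _ _ _
    rw [hC]
    linear_combination (1 - X * C P * mk (Zpar P Q)) * e1
      + (mk (Zpar P Q) * (X * C Q)) * e2
  refine ⟨?_, hf, by simp [Zhat_zero]⟩
  -- uniqueness
  set f := (mk (Zhat P Q) : R⟦X⟧)
  set g := (mk (Zpar P Q) : R⟦X⟧)
  set y : R⟦X⟧ := 1 - X * C (Q - P) - X * C P * (f + g) with hy
  have key : (f - g) * y = 0 := by
    rw [hy]
    linear_combination hf - hg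
  have hyc : constantCoeff y = 1 := by
    rw [hy]
    simp
  have hinv : y * PowerSeries.invOfUnit y 1 = 1 :=
    PowerSeries.mul_invOfUnit y 1 (by rw [hyc]; rfl)
  have hfg : f = g := by
    have : (f - g) * (y * PowerSeries.invOfUnit y 1) = 0 := by
      rw [← mul_assoc, key, zero_mul]
    rw [hinv, mul_one, sub_eq_zero] at this
    exact this
  intro n
  have := congrArg (fun h => (coeff n) h) hfg
  simpa [f, g] using this
end final


/-- `Ẑ_n(P,Q) = Z_n(P,Q)` for all `n ≥ 0`; both generating
functions coincide and satisfy `Z·(1 - z(Q-P) - zP·Z) = 1` with `Z(0) = 1`. -/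
theorem stmt10 {R : Type*} [CommRing R] (P Q : R) :
    (∀ n : ℕ, Zhat P Q n = Zpar P Q n) ∧
    (PowerSeries.mk (Zhat P Q)) *
        (1 - X * C (Q - P) - X * C P * (PowerSeries.mk (Zhat P Q))) = 1 ∧
    constantCoeff (PowerSeries.mk (Zhat P Q)) = 1 := by
  exact stmt10_aux P Q
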